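/- arXiv:2311.01410 — 3 statements merged into one kernel-verified Lean document; each statement's English description precedes it below -/
import Mathlib

section
/- Let k : ℝ^m × ℝ^n → ℝ be a measurable function with k(x,y) > 0 for all (x,y) and ∫ k(x,y) dy = 1 for every x (with respect to Lebesgue measure on ℝ^n), and let κ be the Markov kernel from ℝ^m to ℝ^n defined by κ(x) = (Lebesgue measure on ℝ^n).withDensity(k(x,·)). Let μ̃ and μ be probability measures on ℝ^m that have everywhere strictly positive densities with respect to Lebesgue measure, with μ̃ ≠ μ and D_KL(μ̃ ‖ μ) < ∞. Then D_KL(μ̃.bind κ ‖ μ.bind κ) < D_KL(μ̃ ‖ μ), i.e. passing both measures through the kernel κ strictly decreases their Kullback–Leibler divergence. -/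
open MeasureTheory ProbabilityTheory
open scoped ENNReal NNReal Classical

/-- The Kullback–Leibler divergence between two measures. -/

noncomputable def klDiv {α : Type*} [MeasurableSpace α] (μ ν : Measure α) : ℝ≥0∞ :=
  if μ ≪ ν ∧ Integrable (llr μ ν) μ then ENNReal.ofReal (∫ x, llr μ ν x ∂μ) else ⊤

section AuxiliaryLemmas

open Real

lemma abs_cont_withDensity_pos {α : Type*} [MeasurableSpace α] (P : Measure α)
    {d : α → ℝ≥0∞} (hd : Measurable d) (h0 : ∀ x, d x ≠ 0) :
    P ≪ P.withDensity d := by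
  refine Measure.AbsolutelyContinuous.mk (fun s hs hs0 => ?_)
  rw [withDensity_apply _ hs, setLIntegral_eq_zero_iff hs hd] at hs0
  rw [measure_eq_zero_iff_ae_notMem]
  filter_upwards [hs0] with x hx hxs
  exact h0 x (hx hxs)

theorem key {α β : Type*} [MeasurableSpace α] [MeasurableSpace β]
    (P : Measure α) (Q : Measure β) [SigmaFinite P] [SigmaFinite Q]
    (hP0 : P Set.univ ≠ 0) (hQ0 : Q Set.univ ≠ 0)
    (k : α × β → ℝ) (hk_meas : Measurable k) (hk_pos : ∀ z, 0 < k z)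
    (κ : Kernel α β) [IsMarkovKernel κ]
    (hκ : ∀ x, κ x = Q.withDensity (fun y => ENNReal.ofReal (k (x, y))))
    (μ' μ : Measure α) [IsProbabilityMeasure μ'] [IsProbabilityMeasure μ]
    (f' f : α → ℝ) (hf'_meas : Measurable f') (hf_meas : Measurable f)
    (hf'_pos : ∀ x, 0 < f' x) (hf_pos : ∀ x, 0 < f x)
    (hμ' : μ' = P.withDensity (fun x => ENNReal.ofReal (f' x)))
    (hμ : μ = P.withDensity (fun x => ENNReal.ofReal (f x)))
    (hk_one : ∀ x, ∫ y, k (x, y) ∂Q = 1)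
    (hne : μ' ≠ μ) (hac : μ' ≪ μ) (hint : Integrable (llr μ' μ) μ') :
    (μ'.bind κ) ≪ (μ.bind κ) ∧ Integrable (llr (μ'.bind κ) (μ.bind κ)) (μ'.bind κ) ∧
      0 ≤ ∫ y, llr (μ'.bind κ) (μ.bind κ) y ∂(μ'.bind κ) ∧
      ∫ y, llr (μ'.bind κ) (μ.bind κ) y ∂(μ'.bind κ) < ∫ x, llr μ' μ x ∂μ' := by
  -- basic notation
  set F' : α → ℝ≥0∞ := fun x => ENNReal.ofReal (f' x) with hF'ractDef
  set F : α → ℝ≥0∞ := fun x => ENNReal.ofReal (f x) with hFdef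
  have hF'_meas : Measurable F' := hf'_meas.ennreal_ofReal
  have hF_meas : Measurable F := hf_meas.ennreal_ofReal
  have hF'_pos : ∀ x, F' x ≠ 0 := fun x => by
    simp [hF'ractDef, ENNReal.ofReal_eq_zero, not_le, hf'_pos x]
  have hF_pos : ∀ x, F x ≠ 0 := fun x => by
    simp [hFdef, ENNReal.ofReal_eq_zero, not_le, hf_pos x]
  have hF'_fin : ∀ x, F' x ≠ ∞ := fun x => ENNReal.ofReal_ne_top
  have hF_fin : ∀ x, F x ≠ ∞ := fun x => ENNReal.ofReal_ne_top
  set K : α → β → ℝ≥0∞ := fun x y => ENNReal.ofReal (k (x, y)) with hKdef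
  have hK_meas : Measurable (fun z : α × β => ENNReal.ofReal (k z)) := hk_meas.ennreal_ofReal
  have hK_meas' : ∀ x, Measurable (K x) :=
    fun x => hK_meas.comp (measurable_prodMk_left)
  have hK_pos : ∀ x y, K x y ≠ 0 := fun x y => by
    simp [hKdef, ENNReal.ofReal_eq_zero, not_le, hk_pos (x, y)]
  have hK_fin : ∀ x y, K x y ≠ ∞ := fun x y => ENNReal.ofReal_ne_top
  have hKone : ∀ x, ∫⁻ y, K x y ∂Q = 1 := by
    intro x
    have h1 : (κ x) Set.univ = 1 := measure_univ
    rw [hκ x, withDensity_apply _ MeasurableSet.univ, setLIntegral_univ] at h1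
    exact h1
  -- the output measures have explicit densities
  have bind_eq : ∀ d : α → ℝ≥0∞, Measurable d →
      (P.withDensity d).bind (κ : α → Measure β)
        = Q.withDensity (fun y => ∫⁻ x, d x * K x y ∂P) := by
    intro d hd
    have hW : Measurable (fun p : α × β => d p.1 * K p.1 p.2) :=
      (hd.comp measurable_fst).mul hK_meas
    ext s hs
    rw [Measure.bind_apply hs κ.measurable.aemeasurable, withDensity_apply _ hs]
    have h1 : ∀ x, κ x s = ∫⁻ y in s, K x y ∂Q := fun x => by
      rw [hκ x, withDensity_apply _ hs]
    simp_rw [h1]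
    rw [lintegral_withDensity_eq_lintegral_mul P hd
      (Measurable.lintegral_prod_right' (ν := Q.restrict s) hK_meas)]
    simp_rw [Pi.mul_apply]
    have h2 : ∀ x, d x * ∫⁻ y in s, ENNReal.ofReal (k (x, y)) ∂Q = ∫⁻ y in s, d x * K x y ∂Q := fun x =>
      (lintegral_const_mul (d x) (hK_meas' x)).symm
    simp_rw [h2]
    rw [lintegral_lintegral_swap (μ := P) (ν := Q.restrict s) (f := fun x y => d x * K x y)
      hW.aemeasurable]
  have tot_eq : ∀ d : α → ℝ≥0∞, Measurable d →
      ∫⁻ y, ∫⁻ x, d x * K x y ∂P ∂Q = ∫⁻ x, d x ∂P := by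
    intro d hd
    have hW : Measurable (fun p : α × β => d p.1 * K p.1 p.2) :=
      (hd.comp measurable_fst).mul hK_meas
    rw [← lintegral_lintegral_swap (μ := P) (ν := Q) (f := fun x y => d x * K x y)
      hW.aemeasurable]
    have h2 : ∀ x, ∫⁻ y, d x * K x y ∂Q = d x := fun x => by
      rw [lintegral_const_mul (d x) (hK_meas' x), hKone x, mul_one]
    simp_rw [h2]
  haveI hprobbind : ∀ (m : Measure α), IsProbabilityMeasure m →
      IsProbabilityMeasure (m.bind (κ : α → Measure β)) := by
    intro m hm
    constructor
    rw [Measure.bind_apply MeasurableSet.univ κ.measurable.aemeasurable]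
    simp [measure_univ]
  haveI hPB' : IsProbabilityMeasure (μ'.bind (κ : α → Measure β)) := hprobbind μ' inferInstance
  haveI hPB : IsProbabilityMeasure (μ.bind (κ : α → Measure β)) := hprobbind μ inferInstance
  have hKx_meas : ∀ y, Measurable (fun x => K x y) :=
    fun y => hK_meas.comp (measurable_prodMk_right)
  set G' : β → ℝ≥0∞ := fun y => ∫⁻ x, F' x * K x y ∂P with hG'def
  set G : β → ℝ≥0∞ := fun y => ∫⁻ x, F x * K x y ∂P with hGdef2
  have hG'_meas : Measurable G' :=
    Measurable.lintegral_prod_left' ((hF'_meas.comp measurable_fst).mul hK_meas)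
  have hG_meas : Measurable G :=
    Measurable.lintegral_prod_left' ((hF_meas.comp measurable_fst).mul hK_meas)
  have hbind' : μ'.bind (κ : α → Measure β) = Q.withDensity G' := by
    rw [hμ', bind_eq _ hF'_meas]
  have hbind : μ.bind (κ : α → Measure β) = Q.withDensity G := by
    rw [hμ, bind_eq _ hF_meas]
  have hF'tot : ∫⁻ x, F' x ∂P = 1 := by
    have h := measure_univ (μ := μ')
    rwa [hμ', withDensity_apply _ MeasurableSet.univ, setLIntegral_univ] at h
  have hFtot : ∫⁻ x, F x ∂P = 1 := by
    have h := measure_univ (μ := μ)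
    rwa [hμ, withDensity_apply _ MeasurableSet.univ, setLIntegral_univ] at h
  have hG'tot : ∫⁻ y, G' y ∂Q = 1 := by rw [hG'def, tot_eq _ hF'_meas, hF'tot]
  have hGtot : ∫⁻ y, G y ∂Q = 1 := by rw [hGdef2, tot_eq _ hF_meas, hFtot]
  have hpos_aux : ∀ d : α → ℝ≥0∞, Measurable d → (∀ x, d x ≠ 0) →
      ∀ y, (∫⁻ x, d x * K x y ∂P) ≠ 0 := by
    intro d hd hd0 y h
    rw [lintegral_eq_zero_iff (f := fun x => d x * K x y) (hd.mul (hKx_meas y))] at h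
    have h2 : ∀ᵐ _x ∂P, False := by
      filter_upwards [h] with x hx
      exact mul_ne_zero (hd0 x) (hK_pos x y) hx
    rw [ae_iff] at h2
    simp only [not_false_iff, Set.setOf_true] at h2
    exact hP0 h2
  have hG'_pos : ∀ y, G' y ≠ 0 := hpos_aux _ hF'_meas hF'_pos
  have hG_pos : ∀ y, G y ≠ 0 := hpos_aux _ hF_meas hF_pos
  have hG'_fin : ∀ᵐ y ∂Q, G' y < ∞ :=
    ae_lt_top hG'_meas (by rw [hG'tot]; exact ENNReal.one_ne_top)
  have hG_fin : ∀ᵐ y ∂Q, G y < ∞ :=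
    ae_lt_top hG_meas (by rw [hGtot]; exact ENNReal.one_ne_top)
  -- absolute continuity relations
  have hQν : Q ≪ Q.withDensity G := abs_cont_withDensity_pos Q hG_meas hG_pos
  have hνQ : Q.withDensity G ≪ Q := withDensity_absolutelyContinuous _ _
  have hQν' : Q ≪ Q.withDensity G' := abs_cont_withDensity_pos Q hG'_meas hG'_pos
  have hν'Q : Q.withDensity G' ≪ Q := withDensity_absolutelyContinuous _ _
  have hPμ : P ≪ μ := hμ ▸ abs_cont_withDensity_pos P hF_meas hF_pos
  have hμP : μ ≪ P := hμ ▸ withDensity_absolutelyContinuous _ _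
  have hPμ' : P ≪ μ' := hμ' ▸ abs_cont_withDensity_pos P hF'_meas hF'_pos
  have hμ'P : μ' ≪ P := hμ' ▸ withDensity_absolutelyContinuous _ _
  have hacν : μ'.bind (κ : α → Measure β) ≪ μ.bind (κ : α → Measure β) := by
    rw [hbind', hbind]
    exact hν'Q.trans hQν
  have hQbind : Q ≪ μ.bind (κ : α → Measure β) := by rw [hbind]; exact hQν
  have hbindQ : μ.bind (κ : α → Measure β) ≪ Q := by rw [hbind]; exact hνQ
  have hQbind' : Q ≪ μ'.bind (κ : α → Measure β) := by rw [hbind']; exact hQν'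
  have hbindQ' : μ'.bind (κ : α → Measure β) ≪ Q := by rw [hbind']; exact hν'Q
  -- Radon-Nikodym derivatives
  set R : α → ℝ≥0∞ := fun x => F' x / F x with hRdef
  set S : β → ℝ≥0∞ := fun y => G' y / G y with hSdef
  have hR_meas : Measurable R := hF'_meas.div hF_meas
  have hS_meas : Measurable S := hG'_meas.div hG_meas
  have hμ'R : μ' = μ.withDensity R := by
    rw [hμ, hμ', ← withDensity_mul _ hF_meas hR_meas]
    congr 1
    funext x
    exact (ENNReal.mul_div_cancel (hF_pos x) (hF_fin x)).symm
  have hrnμ : μ'.rnDeriv μ =ᵐ[P] R :=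
    hPμ.ae_le (hμ'R ▸ Measure.rnDeriv_withDensity μ hR_meas)
  have hν'S : μ'.bind (κ : α → Measure β) = (μ.bind (κ : α → Measure β)).withDensity S := by
    rw [hbind, hbind', ← withDensity_mul _ hG_meas hS_meas]
    apply withDensity_congr_ae
    filter_upwards [hG_fin] with y hy
    exact (ENNReal.mul_div_cancel (hG_pos y) hy.ne).symm
  have hrnν : (μ'.bind (κ : α → Measure β)).rnDeriv (μ.bind (κ : α → Measure β)) =ᵐ[Q] S := by
    have h : ((μ.bind (κ : α → Measure β)).withDensity S).rnDeriv
        (μ.bind (κ : α → Measure β)) =ᵐ[μ.bind (κ : α → Measure β)] S :=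
      Measure.rnDeriv_withDensity _ hS_meas
    rw [← hν'S] at h
    exact hQbind.ae_le h
  -- real-valued densities
  set ρ : α → ℝ := fun x => f' x / f x with hρdef
  have hρ_meas : Measurable ρ := hf'_meas.div hf_meas
  have hρ_pos : ∀ x, 0 < ρ x := fun x => div_pos (hf'_pos x) (hf_pos x)
  have hRρ : ∀ x, R x = ENNReal.ofReal (ρ x) := fun x =>
    (ENNReal.ofReal_div_of_pos (hf_pos x)).symm
  set σ : β → ℝ := fun y => (S y).toReal with hσdef
  have hσ_meas : Measurable σ := hS_meas.ennreal_toReal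
  have hσ_nonneg : ∀ y, 0 ≤ σ y := fun y => ENNReal.toReal_nonneg
  have hS_fin : ∀ᵐ y ∂Q, S y < ∞ := by
    filter_upwards [hG'_fin] with y hy
    exact ENNReal.div_lt_top hy.ne (hG_pos y)
  have hSσ : ∀ᵐ y ∂Q, S y = ENNReal.ofReal (σ y) := by
    filter_upwards [hS_fin] with y hy
    rw [hσdef, ENNReal.ofReal_toReal hy.ne]
  -- llr identifications and change of variables on the input side
  have hllrμ : llr μ' μ =ᵐ[μ'] fun x => log (ρ x) := by
    filter_upwards [hμ'P.ae_le hrnμ] with x hx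
    show log ((μ'.rnDeriv μ x).toReal) = _
    rw [hx, hRρ x, ENNReal.toReal_ofReal (hρ_pos x).le]
  have hsmul_eqμ : ∀ x, ((ρ x).toNNReal : ℝ≥0) • log (ρ x) = ρ x * log (ρ x) := fun x => by
    rw [NNReal.smul_def, Real.coe_toNNReal _ (hρ_pos x).le, smul_eq_mul]
  have hμ'ρ : μ' = μ.withDensity (fun x => ((ρ x).toNNReal : ℝ≥0∞)) := by
    rw [hμ'R]
    congr 1
    funext x
    rw [hRρ x]
    rfl
  have hint_ρ : Integrable (fun x => ρ x * log (ρ x)) μ := by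
    have h1 : Integrable (fun x => log (ρ x)) μ' := hint.congr hllrμ
    rw [hμ'ρ, integrable_withDensity_iff_integrable_smul hρ_meas.real_toNNReal] at h1
    exact h1.congr (Filter.Eventually.of_forall fun x => hsmul_eqμ x)
  have hB : ∫ x, llr μ' μ x ∂μ' = ∫ x, ρ x * log (ρ x) ∂μ := by
    rw [integral_congr_ae hllrμ, hμ'ρ,
      integral_withDensity_eq_integral_smul hρ_meas.real_toNNReal]
    exact integral_congr_ae (Filter.Eventually.of_forall fun x => hsmul_eqμ x)
  -- the product function and Fubini
  set φ : α → ℝ := fun x => ρ x * log (ρ x) with hφdef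
  have hφ_meas : Measurable φ := hρ_meas.mul (Real.measurable_log.comp hρ_meas)
  set Φ : α × β → ℝ := fun z => φ z.1 * (f z.1 * k z) with hΦdef
  have hΦ_meas : Measurable Φ :=
    (hφ_meas.comp measurable_fst).mul ((hf_meas.comp measurable_fst).mul hk_meas)
  have hμf : μ = P.withDensity (fun x => ((f x).toNNReal : ℝ≥0∞)) := by
    rw [hμ]; rfl
  have hΦnorm : ∀ z : α × β, (‖Φ z‖₊ : ℝ≥0∞)
      = ENNReal.ofReal |φ z.1| * (F z.1 * K z.1 z.2) := by
    intro z
    rw [hΦdef]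
    simp only [nnnorm_mul, ENNReal.coe_mul]
    congr 1
    · rw [← Real.enorm_eq_ofReal (abs_nonneg _)]
      simp [Real.nnnorm_abs, enorm_eq_nnnorm]
    · rw [← enorm_eq_nnnorm, ← enorm_eq_nnnorm, Real.enorm_eq_ofReal (hf_pos z.1).le, Real.enorm_eq_ofReal (hk_pos z).le]
  have hφμ_fin : ∫⁻ x, ENNReal.ofReal |φ x| ∂μ < ∞ := by
    have h : ∫⁻ x, (‖φ x‖₊ : ℝ≥0∞) ∂μ < ∞ := hint_ρ.2
    refine lt_of_eq_of_lt ?_ h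
    apply lintegral_congr
    intro x
    rw [← Real.enorm_eq_ofReal (abs_nonneg _)]
    simp [Real.nnnorm_abs, enorm_eq_nnnorm]
  have hΦ_int : Integrable Φ (P.prod Q) := by
    refine ⟨hΦ_meas.aestronglyMeasurable, ?_⟩
    show ∫⁻ z, (‖Φ z‖₊ : ℝ≥0∞) ∂(P.prod Q) < ∞
    calc ∫⁻ z, (‖Φ z‖₊ : ℝ≥0∞) ∂(P.prod Q)
        = ∫⁻ z, ENNReal.ofReal |φ z.1| * (F z.1 * K z.1 z.2) ∂(P.prod Q) := by
          apply lintegral_congr hΦnorm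
      _ = ∫⁻ x, ∫⁻ y, ENNReal.ofReal |φ x| * (F x * K x y) ∂Q ∂P := by
          rw [lintegral_prod]
          exact ((hφ_meas.abs.ennreal_ofReal.comp measurable_fst).mul
            ((hF_meas.comp measurable_fst).mul hK_meas)).aemeasurable
      _ = ∫⁻ x, ENNReal.ofReal |φ x| * F x ∂P := by
          apply lintegral_congr
          intro x
          simp_rw [← mul_assoc]
          rw [lintegral_const_mul _ (hK_meas' x), hKone x, mul_one]
      _ = ∫⁻ x, ENNReal.ofReal |φ x| ∂μ := by
          rw [hμ, lintegral_withDensity_eq_lintegral_mul P hF_meas hφ_meas.abs.ennreal_ofReal]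
          apply lintegral_congr
          intro x
          exact mul_comm _ _
      _ < ∞ := hφμ_fin
  have hslice : ∀ᵐ y ∂Q, Integrable (fun x => Φ (x, y)) P := hΦ_int.prod_left_ae
  set ψ : β → ℝ := fun y => ∫ x, Φ (x, y) ∂P with hψdef
  have hψ_int : Integrable ψ Q := hΦ_int.integral_prod_right
  have hψB : ∫ y, ψ y ∂Q = ∫ x, φ x ∂μ := by
    rw [hψdef]
    have hswap := (integral_integral_swap (f := fun x y => Φ (x, y)) (μ := P) (ν := Q)
      (by exact hΦ_int)).symm
    rw [hswap]
    have hinner : ∀ x, ∫ y, Φ (x, y) ∂Q = φ x * f x := by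
      intro x
      have : ∀ y, Φ (x, y) = (φ x * f x) * k (x, y) := fun y => by
        rw [hΦdef]; ring
      simp_rw [this]
      rw [MeasureTheory.integral_const_mul, hk_one x, mul_one]
    simp_rw [hinner]
    rw [hμf, integral_withDensity_eq_integral_smul hf_meas.real_toNNReal]
    apply integral_congr_ae
    apply Filter.Eventually.of_forall
    intro x
    show φ x * f x = ((f x).toNNReal : ℝ≥0) • φ x
    rw [NNReal.smul_def, Real.coe_toNNReal _ (hf_pos x).le, smul_eq_mul, mul_comm]
  -- ρ is not a.e. constant
  have hρ_nonconst : ∀ c : ℝ, ¬ (ρ =ᵐ[P] fun _ => c) := by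
    intro c h
    haveI : Filter.NeBot (ae P) := ae_neBot.mpr (fun h0 => hP0 (by simp [h0]))
    have hc_pos : 0 < c := by
      obtain ⟨x, hx⟩ := h.exists
      have h2 := hρ_pos x
      rw [hx] at h2
      exact h2
    have hF'c : F' =ᵐ[P] fun x => ENNReal.ofReal c * F x := by
      filter_upwards [h] with x hx
      have hfx : f' x = c * f x := by
        rw [← hx, hρdef]
        show f' x = f' x / f x * f x
        rw [div_mul_cancel₀ _ (hf_pos x).ne']
      show ENNReal.ofReal (f' x) = ENNReal.ofReal c * ENNReal.ofReal (f x)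
      rw [hfx, ENNReal.ofReal_mul hc_pos.le]
    have hμ'c : μ' = (ENNReal.ofReal c) • μ := by
      rw [hμ', hμ, ← withDensity_smul _ hF_meas]
      exact withDensity_congr_ae hF'c
    have h1 : ENNReal.ofReal c = 1 := by
      have h2 := measure_univ (μ := μ')
      rw [hμ'c, Measure.smul_apply, smul_eq_mul, measure_univ, mul_one] at h2
      exact h2
    exact hne (by rw [hμ'c, h1, one_smul])
  -- real-valued output density
  set g : β → ℝ := fun y => (G y).toReal with hgdef
  have hg_meas : Measurable g := hG_meas.ennreal_toReal
  -- pointwise strict Jensen inequality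
  have hjensen : ∀ᵐ y ∂Q, σ y * log (σ y) * g y < ψ y := by
    filter_upwards [hG_fin, hG'_fin, hslice] with y hGy hG'y hsl
    have hgy_pos : 0 < g y := ENNReal.toReal_pos (hG_pos y) hGy.ne
    set d : α → ℝ≥0∞ := fun x => F x * K x y / G y with hddef
    have hd_meas : Measurable d := (hF_meas.mul (hKx_meas y)).div measurable_const
    have hd_pos : ∀ x, d x ≠ 0 := fun x =>
      ENNReal.div_ne_zero.mpr ⟨mul_ne_zero (hF_pos x) (hK_pos x y), hGy.ne⟩
    have hd_fin : ∀ x, d x ≠ ∞ := fun x =>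
      (ENNReal.div_lt_top (ENNReal.mul_ne_top (hF_fin x) (hK_fin x y)) (hG_pos y)).ne
    set η : Measure α := P.withDensity d with hηdef
    haveI : IsProbabilityMeasure η := by
      constructor
      rw [hηdef, withDensity_apply _ MeasurableSet.univ, setLIntegral_univ]
      simp_rw [hddef, div_eq_mul_inv]
      rw [lintegral_mul_const (f := fun x => F x * K x y) _ (hF_meas.mul (hKx_meas y)), ← div_eq_mul_inv]
      exact ENNReal.div_self (hG_pos y) hGy.ne
    have hPη : P ≪ η := abs_cont_withDensity_pos P hd_meas hd_pos
    have hηP : η ≪ P := withDensity_absolutelyContinuous _ _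
    -- the average of ρ with respect to η is σ y
    have hpt : ∀ x, ENNReal.ofReal (ρ x) * d x = F' x * K x y / G y := by
      intro x
      rw [← hRρ x, hRdef, hddef]
      simp only [div_eq_mul_inv]
      rw [show F' x * (F x)⁻¹ * (F x * K x y * (G y)⁻¹)
          = F' x * ((F x)⁻¹ * F x) * K x y * (G y)⁻¹ by ring,
        ENNReal.inv_mul_cancel (hF_pos x) (hF_fin x), mul_one]
    have hlρ : ∫⁻ x, ENNReal.ofReal (ρ x) ∂η = S y := by
      rw [hηdef, lintegral_withDensity_eq_lintegral_mul P hd_meas hρ_meas.ennreal_ofReal]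
      calc ∫⁻ x, d x * ENNReal.ofReal (ρ x) ∂P
          = ∫⁻ x, F' x * K x y / G y ∂P := by
            apply lintegral_congr
            intro x
            rw [mul_comm, hpt x]
        _ = S y := by
            simp_rw [div_eq_mul_inv]
            rw [lintegral_mul_const (f := fun x => F' x * K x y) _ (hF'_meas.mul (hKx_meas y)), hSdef, ← div_eq_mul_inv]
    have hρ_int_η : Integrable ρ η := by
      constructor
      · exact hρ_meas.aestronglyMeasurable
      · show ∫⁻ x, (‖ρ x‖₊ : ℝ≥0∞) ∂η < ∞
        have : ∀ x, (‖ρ x‖₊ : ℝ≥0∞) = ENNReal.ofReal (ρ x) := fun x =>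
          Real.enorm_eq_ofReal (hρ_pos x).le
        simp_rw [this]
        rw [hlρ]
        exact ENNReal.div_lt_top hG'y.ne (hG_pos y)
    have havg : ∫ x, ρ x ∂η = σ y := by
      rw [integral_eq_lintegral_of_nonneg_ae (Filter.Eventually.of_forall fun x => (hρ_pos x).le)
        hρ_meas.aestronglyMeasurable, hlρ, hσdef]
    -- η in terms of a real density
    have hηreal : η = P.withDensity (fun x => (((f x * k (x, y)) / g y).toNNReal : ℝ≥0∞)) := by
      rw [hηdef]
      congr 1
      funext x
      show d x = ENNReal.ofReal ((f x * k (x, y)) / g y)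
      rw [ENNReal.ofReal_div_of_pos hgy_pos, ENNReal.ofReal_mul (hf_pos x).le, hgdef,
        ENNReal.ofReal_toReal hGy.ne, hddef]
    have hdreal_meas : Measurable (fun x => ((f x * k (x, y)) / g y).toNNReal) :=
      ((hf_meas.mul (hk_meas.comp measurable_prodMk_right)).div_const _).real_toNNReal
    have hsmul_eq : ∀ x, (((f x * k (x, y)) / g y).toNNReal : ℝ≥0) • (ρ x * log (ρ x))
        = Φ (x, y) / g y := fun x => by
      rw [NNReal.smul_def, Real.coe_toNNReal _
        (div_nonneg (mul_pos (hf_pos x) (hk_pos (x, y))).le hgy_pos.le), smul_eq_mul]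
      show f x * k (x, y) / g y * (ρ x * log (ρ x)) = φ x * (f x * k (x, y)) / g y
      ring
    have hφρ_int_η : Integrable (fun x => ρ x * log (ρ x)) η := by
      rw [hηreal, integrable_withDensity_iff_integrable_smul hdreal_meas]
      refine Integrable.congr (hsl.div_const (g y)) ?_
      filter_upwards with x
      rw [hsmul_eq x]
    have hφρ_avg : ∫ x, ρ x * log (ρ x) ∂η = ψ y / g y := by
      rw [hηreal, integral_withDensity_eq_integral_smul hdreal_meas]
      simp_rw [hsmul_eq]
      rw [integral_div]
    -- strict Jensen
    rcases Real.strictConvexOn_mul_log.ae_eq_const_or_map_average_lt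
        Real.continuous_mul_log.continuousOn isClosed_Ici
        (Filter.Eventually.of_forall fun x => (hρ_pos x).le) hρ_int_η hφρ_int_η with hconst | hlt
    · exact absurd (hPη.ae_le hconst) (hρ_nonconst _)
    · rw [average_eq_integral, average_eq_integral, havg] at hlt
      have hlt2 : σ y * log (σ y) < ψ y / g y := by
        refine lt_of_lt_of_eq hlt ?_
        rw [← hφρ_avg]
      calc σ y * log (σ y) * g y < (ψ y / g y) * g y := by
            exact mul_lt_mul_of_pos_right hlt2 hgy_pos
        _ = ψ y := div_mul_cancel₀ _ hgy_pos.ne'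
  -- integrability of the output entropy integrand
  have hmll : ∀ t : ℝ, 0 ≤ t → -1 ≤ t * log t := by
    intro t ht
    rcases eq_or_lt_of_le ht with h0 | h0
    · simp [← h0]
    · have h1 := Real.log_le_sub_one_of_pos (inv_pos.mpr h0)
      rw [Real.log_inv] at h1
      have h2 : t * t⁻¹ = 1 := mul_inv_cancel₀ h0.ne'
      nlinarith [h1, h2, h0]
  have hg_int : Integrable g Q := by
    refine ⟨hg_meas.aestronglyMeasurable, ?_⟩
    show ∫⁻ y, (‖g y‖₊ : ℝ≥0∞) ∂Q < ∞
    have heq : ∫⁻ y, (‖g y‖₊ : ℝ≥0∞) ∂Q = ∫⁻ y, G y ∂Q := by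
      apply lintegral_congr_ae
      filter_upwards [hG_fin] with y hy
      rw [← enorm_eq_nnnorm, Real.enorm_eq_ofReal ENNReal.toReal_nonneg]
      exact ENNReal.ofReal_toReal hy.ne
    rw [heq, hGtot]
    exact ENNReal.one_lt_top
  have hσlog_meas : Measurable (fun y => σ y * log (σ y)) :=
    hσ_meas.mul (Real.measurable_log.comp hσ_meas)
  have hσg_int : Integrable (fun y => σ y * log (σ y) * g y) Q := by
    apply Integrable.mono' (hg_int.add hψ_int.abs)
      (hσlog_meas.mul hg_meas).aestronglyMeasurable
    filter_upwards [hjensen] with y hy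
    simp only [Pi.add_apply, Pi.mul_apply]
    rw [Real.norm_eq_abs, abs_le]
    have hgy : 0 ≤ g y := ENNReal.toReal_nonneg
    constructor
    · have h1 : -1 * g y ≤ σ y * log (σ y) * g y :=
        mul_le_mul_of_nonneg_right (hmll (σ y) (hσ_nonneg y)) hgy
      have h2 : (0:ℝ) ≤ |ψ y| := abs_nonneg _
      linarith
    · have h2 : ψ y ≤ |ψ y| := le_abs_self _
      linarith
  -- strict inequality between the two real integrals
  have hint_lt : ∫ y, σ y * log (σ y) * g y ∂Q < ∫ y, ψ y ∂Q := by
    have hpos : 0 < ∫ y, (ψ y - σ y * log (σ y) * g y) ∂Q := by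
      rw [integral_pos_iff_support_of_nonneg_ae]
      · set u : β → ℝ := fun y => ψ y - σ y * log (σ y) * g y with hudef
        have hsub : ∀ᵐ y ∂Q, y ∈ Function.support u := by
          filter_upwards [hjensen] with y hy
          simp only [hudef, Function.support, Set.mem_setOf_eq, sub_ne_zero]
          exact (ne_of_lt hy).symm
        have hcompl : Q {y | y ∉ Function.support u} = 0 := by
          rw [← ae_iff] at *
          exact hsub
        by_contra hle
        push_neg at hle
        have h0 : Q (Function.support u) = 0 := le_antisymm hle zero_le
        have huniv : Q Set.univ = 0 := by
          have h3 := measure_union_le (μ := Q) (Function.support u) {y | y ∉ Function.support u}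
          rw [h0, hcompl] at h3
          have h4 : (Function.support u ∪ {y | y ∉ Function.support u}) = Set.univ := by
            ext y
            by_cases hy : y ∈ Function.support u
            · simp [hy]
            · simp [hy, Set.mem_setOf_eq, Function.notMem_support.mp hy]
          rw [h4] at h3
          simpa using h3
        exact hQ0 huniv
      · filter_upwards [hjensen] with y hy
        simp only [Pi.zero_apply]
        linarith
      · exact hψ_int.sub hσg_int
    have hsubint := integral_sub hψ_int hσg_int
    rw [hsubint] at hpos
    linarith
  -- identify the output KL integrand
  have hν'σ : μ'.bind (κ : α → Measure β)
      = (μ.bind (κ : α → Measure β)).withDensity (fun y => (((σ y).toNNReal : ℝ≥0) : ℝ≥0∞)) := by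
    rw [hν'S]
    apply withDensity_congr_ae
    exact hbindQ.ae_le hSσ
  have hνg : μ.bind (κ : α → Measure β)
      = Q.withDensity (fun y => (((g y).toNNReal : ℝ≥0) : ℝ≥0∞)) := by
    rw [hbind]
    apply withDensity_congr_ae
    filter_upwards [hG_fin] with y hy
    show G y = ENNReal.ofReal (g y)
    rw [hgdef, ENNReal.ofReal_toReal hy.ne]
  have hsmul_eqσ : ∀ y, ((σ y).toNNReal : ℝ≥0) • log (σ y) = σ y * log (σ y) := fun y => by
    rw [NNReal.smul_def, Real.coe_toNNReal _ (hσ_nonneg y), smul_eq_mul]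
  have hsmul_eqg : ∀ y, ((g y).toNNReal : ℝ≥0) • (σ y * log (σ y)) = σ y * log (σ y) * g y :=
    fun y => by
      rw [NNReal.smul_def, Real.coe_toNNReal _ ENNReal.toReal_nonneg, smul_eq_mul, mul_comm]
  have hllrν : llr (μ'.bind (κ : α → Measure β)) (μ.bind (κ : α → Measure β))
      =ᵐ[μ'.bind (κ : α → Measure β)] fun y => log (σ y) := by
    filter_upwards [hbindQ'.ae_le hrnν] with y hy
    show log (((μ'.bind (κ : α → Measure β)).rnDeriv (μ.bind (κ : α → Measure β)) y).toReal) = _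
    rw [hy]
  have hσlog_int_ν : Integrable (fun y => σ y * log (σ y)) (μ.bind (κ : α → Measure β)) := by
    rw [hνg, integrable_withDensity_iff_integrable_smul hg_meas.real_toNNReal]
    exact hσg_int.congr (Filter.Eventually.of_forall fun y => (hsmul_eqg y).symm)
  have hintν : Integrable (llr (μ'.bind (κ : α → Measure β)) (μ.bind (κ : α → Measure β)))
      (μ'.bind (κ : α → Measure β)) := by
    have h1 : Integrable (fun y => log (σ y)) (μ'.bind (κ : α → Measure β)) := by
      rw [hν'σ, integrable_withDensity_iff_integrable_smul hσ_meas.real_toNNReal]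
      have h2 : Integrable (fun y => σ y * log (σ y)) (μ.bind (κ : α → Measure β)) := hσlog_int_ν
      exact h2.congr (Filter.Eventually.of_forall fun y => (hsmul_eqσ y).symm)
    exact h1.congr hllrν.symm
  have hAeq : ∫ y, llr (μ'.bind (κ : α → Measure β)) (μ.bind (κ : α → Measure β)) y
      ∂(μ'.bind (κ : α → Measure β)) = ∫ y, σ y * log (σ y) * g y ∂Q := by
    rw [integral_congr_ae hllrν]
    rw [hν'σ, integral_withDensity_eq_integral_smul hσ_meas.real_toNNReal]
    rw [show (fun y => ((σ y).toNNReal : ℝ≥0) • log (σ y)) = fun y => σ y * log (σ y) from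
      funext hsmul_eqσ]
    rw [hνg, integral_withDensity_eq_integral_smul hg_meas.real_toNNReal]
    exact integral_congr_ae (Filter.Eventually.of_forall fun y => hsmul_eqg y)
  -- nonnegativity of the output KL integral (Gibbs)
  have hσ_int_ν : Integrable σ (μ.bind (κ : α → Measure β)) := by
    have hIT := Measure.integrable_toReal_rnDeriv (μ := μ'.bind (κ : α → Measure β))
      (ν := μ.bind (κ : α → Measure β))
    apply hIT.congr
    filter_upwards [hbindQ.ae_le hrnν] with y hy
    rw [hy]
  have havgσ : ∫ y, σ y ∂(μ.bind (κ : α → Measure β)) = 1 := by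
    have h1 : ∫ y, σ y ∂(μ.bind (κ : α → Measure β)) = ∫ y,
        ((μ'.bind (κ : α → Measure β)).rnDeriv (μ.bind (κ : α → Measure β)) y).toReal
        ∂(μ.bind (κ : α → Measure β)) := by
      apply integral_congr_ae
      filter_upwards [hbindQ.ae_le hrnν] with y hy
      rw [hy]
    rw [h1, Measure.integral_toReal_rnDeriv hacν, probReal_univ]
  have hA_nonneg : 0 ≤ ∫ y, σ y * log (σ y) * g y ∂Q := by
    have hJ := Real.convexOn_mul_log.map_average_le (μ := μ.bind (κ : α → Measure β))
      Real.continuous_mul_log.continuousOn isClosed_Ici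
      (Filter.Eventually.of_forall fun y => hσ_nonneg y) hσ_int_ν hσlog_int_ν
    rw [average_eq_integral, average_eq_integral, havgσ] at hJ
    simp only [Real.log_one, mul_zero, one_mul, mul_one] at hJ
    have heq : ∫ y, σ y * log (σ y) ∂(μ.bind (κ : α → Measure β))
        = ∫ y, σ y * log (σ y) * g y ∂Q := by
      rw [hνg, integral_withDensity_eq_integral_smul hg_meas.real_toNNReal]
      exact integral_congr_ae (Filter.Eventually.of_forall fun y => hsmul_eqg y)
    rw [heq] at hJ
    exact hJ
  refine ⟨hacν, hintν, ?_, ?_⟩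
  · rw [hAeq]
    exact hA_nonneg
  · rw [hAeq, hB, ← hψB]
    exact hint_lt


end AuxiliaryLemmas

/-- **Theorem 3 (Contraction of Cycle-SDEs), formal core.** A Markov kernel from `ℝ^m` to `ℝ^n`
with an everywhere strictly positive transition density strictly decreases the KL divergence
between two distinct priors with everywhere strictly positive Lebesgue densities. -/
theorem klDiv_bind_lt_of_pos_density {m n : ℕ}
    (k : (Fin m → ℝ) × (Fin n → ℝ) → ℝ)
    (hk_meas : Measurable k) (hk_pos : ∀ z, 0 < k z)
    (hk_one : ∀ x, ∫ y, k (x, y) = 1)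
    (κ : Kernel (Fin m → ℝ) (Fin n → ℝ)) [IsMarkovKernel κ]
    (hκ : ∀ x, κ x = volume.withDensity (fun y => ENNReal.ofReal (k (x, y))))
    (μ' μ : Measure (Fin m → ℝ)) [IsProbabilityMeasure μ'] [IsProbabilityMeasure μ]
    (f' f : (Fin m → ℝ) → ℝ) (hf'_meas : Measurable f') (hf_meas : Measurable f)
    (hf'_pos : ∀ x, 0 < f' x) (hf_pos : ∀ x, 0 < f x)
    (hμ' : μ' = volume.withDensity (fun x => ENNReal.ofReal (f' x)))
    (hμ : μ = volume.withDensity (fun x => ENNReal.ofReal (f x)))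
    (hne : μ' ≠ μ) (hfin : klDiv μ' μ < ⊤) :
    klDiv (μ'.bind κ) (μ.bind κ) < klDiv μ' μ := by
  have hvol : ∀ p : ℕ, (volume : Measure (Fin p → ℝ)) Set.univ ≠ 0 := by
    intro p
    exact (IsOpen.measure_pos volume isOpen_univ Set.univ_nonempty).ne'
  obtain ⟨hac, hint⟩ : μ' ≪ μ ∧ Integrable (llr μ' μ) μ' := by
    rw [klDiv] at hfin
    split_ifs at hfin with h
    · exact h
    · exact absurd hfin (lt_irrefl _)
  obtain ⟨hacν, hintν, hA0, hAB⟩ := key volume volume (hvol m) (hvol n) k hk_meas hk_pos κ hκ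
    μ' μ f' f hf'_meas hf_meas hf'_pos hf_pos hμ' hμ hk_one hne hac hint
  rw [klDiv, if_pos ⟨hacν, hintν⟩, klDiv, if_pos ⟨hac, hint⟩]
  exact (ENNReal.ofReal_lt_ofReal_iff (lt_of_le_of_lt hA0 hAB)).mpr hAB
end

section
/- Let f : ℝ → ℝ be measurable and σ > 0, and let κ be the Markov kernel from ℝ to ℝ defined by κ(x) = N(f(x), σ²), the Gaussian measure with mean f(x) and variance σ². Let μ̃ and μ be probability measures on ℝ with everywhere strictly positive densities with respect to Lebesgue measure, with μ̃ ≠ μ and D_KL(μ̃ ‖ μ) < ∞. Then D_KL(μ̃.bind κ ‖ μ.bind κ) < D_KL(μ̃ ‖ μ). -/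
open MeasureTheory ProbabilityTheory Real
open scoped ENNReal NNReal Classical

section Aux

variable {q' q : ℝ → ℝ≥0∞}

lemma wd_ac (hq : Measurable q) (hq0 : ∀ᵐ y : ℝ, q y ≠ 0) :
    (volume.withDensity q') ≪ volume.withDensity q :=
  (withDensity_absolutelyContinuous _ _).trans
    (withDensity_absolutelyContinuous' hq.aemeasurable hq0)

lemma llr_wd (hq' : Measurable q') (hq : Measurable q)
    (hq'_top : ∀ᵐ y : ℝ, q' y ≠ ∞) (hq0 : ∀ᵐ y : ℝ, q y ≠ 0) (hq_top : ∀ᵐ y : ℝ, q y ≠ ∞) :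
    llr (volume.withDensity q') (volume.withDensity q)
      =ᵐ[volume] fun y => log ((q' y).toReal / (q y).toReal) := by
  have _ : SigmaFinite (volume.withDensity q') := SigmaFinite.withDensity_of_ne_top hq'_top
  have h1 := Measure.rnDeriv_withDensity_right (volume.withDensity q') volume
    hq.aemeasurable hq0 hq_top
  have h2 := Measure.rnDeriv_withDensity (volume : Measure ℝ) hq'
  filter_upwards [h1, h2] with y hy1 hy2
  simp only [llr, hy1, hy2, ENNReal.toReal_mul, ENNReal.toReal_inv]
  rw [div_eq_inv_mul]

lemma jensen_mul_log {m : Measure ℝ} [IsProbabilityMeasure m] {u : ℝ → ℝ}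
    (hu0 : ∀ᵐ x ∂m, 0 ≤ u x) (hui : Integrable u m)
    (hgi : Integrable (fun x => u x * log (u x)) m) :
    (u =ᵐ[m] fun _ => ∫ x, u x ∂m) ∨
      (∫ x, u x ∂m) * log (∫ x, u x ∂m) < ∫ x, u x * log (u x) ∂m := by
  have h := strictConvexOn_mul_log.ae_eq_const_or_map_average_lt
    continuous_mul_log.continuousOn isClosed_Ici (s := Set.Ici 0) (f := u)
    (by filter_upwards [hu0] with x hx using Set.mem_Ici.2 hx) hui hgi
  rwa [average_eq_integral, average_eq_integral] at h

lemma jensen_mul_log_le {m : Measure ℝ} [IsProbabilityMeasure m] {u : ℝ → ℝ}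
    (hu0 : ∀ᵐ x ∂m, 0 ≤ u x) (hui : Integrable u m)
    (hgi : Integrable (fun x => u x * log (u x)) m) :
    (∫ x, u x ∂m) * log (∫ x, u x ∂m) ≤ ∫ x, u x * log (u x) ∂m := by
  rcases jensen_mul_log hu0 hui hgi with h | h
  · have : (fun x => u x * log (u x)) =ᵐ[m]
        (fun _ => (∫ x, u x ∂m) * log (∫ x, u x ∂m)) := by
      filter_upwards [h] with x hx; rw [hx]
    rw [integral_congr_ae this, integral_const, probReal_univ]
    simp
  · exact h.le

lemma mul_log_ge_neg_exp {t : ℝ} (ht : 0 ≤ t) : -Real.exp (-1) ≤ t * log t := by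
  rcases eq_or_lt_of_le ht with h | h
  · simp [← h, neg_nonpos, (Real.exp_pos _).le]
  · set u := log t with hu
    have hte : t = Real.exp u := (Real.exp_log h).symm
    rw [hte]
    rcases le_or_gt 0 u with hu0 | hu0
    · have : 0 ≤ Real.exp u * u := mul_nonneg (Real.exp_pos _).le hu0
      nlinarith [Real.exp_pos (-1 : ℝ)]
    · have h1 : -u ≤ Real.exp (-(u + 1)) := by
        have := Real.add_one_le_exp (-(u + 1))
        linarith
      have h2 : Real.exp (-(u + 1)) * Real.exp (u + 1) = 1 := by
        rw [← Real.exp_add, neg_add_cancel, Real.exp_zero]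
      have h3 : Real.exp (u + 1) = Real.exp u * Real.exp 1 := Real.exp_add u 1
      have h4 : (-u) * Real.exp (u + 1) ≤ 1 := by
        calc (-u) * Real.exp (u + 1) ≤ Real.exp (-(u + 1)) * Real.exp (u + 1) :=
              mul_le_mul_of_nonneg_right h1 (Real.exp_pos _).le
          _ = 1 := h2
      have h5 : Real.exp (-1) * Real.exp 1 = 1 := by
        rw [← Real.exp_add, neg_add_cancel, Real.exp_zero]
      nlinarith [Real.exp_pos u, Real.exp_pos (1 : ℝ), Real.exp_pos (-1 : ℝ)]

end Aux

namespace CycleSDEAux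

noncomputable def phi (f : ℝ → ℝ) (v : ℝ≥0) (x y : ℝ) : ℝ := gaussianPDFReal (f x) v y

noncomputable def dens (w f : ℝ → ℝ) (v : ℝ≥0) (y : ℝ) : ℝ≥0∞ :=
  ∫⁻ x, ENNReal.ofReal (w x) * ENNReal.ofReal (phi f v x y)

variable {f w u g' g : ℝ → ℝ} {v : ℝ≥0}

lemma measurable_phi (hf : Measurable f) :
    Measurable fun p : ℝ × ℝ => phi f v p.1 p.2 := by
  simp only [phi, gaussianPDFReal]
  have h1 : Measurable fun p : ℝ × ℝ => p.2 - f p.1 :=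
    measurable_snd.sub (hf.comp measurable_fst)
  exact (((h1.pow_const 2).neg.div_const _).exp).const_mul _

lemma measurable_phi_right (hf : Measurable f) (y : ℝ) : Measurable fun x => phi f v x y := by
  simp only [phi, gaussianPDFReal]
  exact (((measurable_const.sub hf).pow_const 2).neg.div_const _).exp.const_mul _

lemma phi_pos (hv : v ≠ 0) (x y : ℝ) : 0 < phi f v x y := gaussianPDFReal_pos _ _ _ hv

lemma phi_nonneg (f : ℝ → ℝ) (v : ℝ≥0) (x y : ℝ) : 0 ≤ phi f v x y :=
  gaussianPDFReal_nonneg _ _ _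

lemma lintegral_phi (hv : v ≠ 0) (x : ℝ) : ∫⁻ y, ENNReal.ofReal (phi f v x y) = 1 :=
  lintegral_gaussianPDFReal_eq_one _ hv

lemma integral_phi (hv : v ≠ 0) (x : ℝ) : ∫ y, phi f v x y = 1 :=
  integral_gaussianPDFReal_eq_one _ hv

lemma measurable_dens (hw : Measurable w) (hf : Measurable f) :
    Measurable (dens w f v) :=
  Measurable.lintegral_prod_left
    (f := fun x y => ENNReal.ofReal (w x) * ENNReal.ofReal (phi f v x y))
    (by exact ((hw.comp measurable_fst).ennreal_ofReal).mul (measurable_phi hf).ennreal_ofReal)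

lemma lintegral_dens (hw : Measurable w) (hf : Measurable f) (hv : v ≠ 0) :
    ∫⁻ y, dens w f v y = ∫⁻ x, ENNReal.ofReal (w x) := by
  unfold dens
  rw [← lintegral_lintegral_swap
    (((hw.comp measurable_fst).ennreal_ofReal.mul
      (measurable_phi hf).ennreal_ofReal).aemeasurable)]
  congr 1 with x
  rw [lintegral_const_mul' _ _ ENNReal.ofReal_ne_top, lintegral_phi hv x, mul_one]

lemma dens_ne_zero (hw : Measurable w) (hf : Measurable f) (hv : v ≠ 0)
    (hwpos : ∀ x, 0 < w x) (y : ℝ) : dens w f v y ≠ 0 := by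
  have hm : Measurable fun x => ENNReal.ofReal (w x) * ENNReal.ofReal (phi f v x y) :=
    hw.ennreal_ofReal.mul (measurable_phi_right hf y).ennreal_ofReal
  refine ((lintegral_pos_iff_support hm).2 ?_).ne'
  have hsupp : Function.support (fun x => ENNReal.ofReal (w x) * ENNReal.ofReal (phi f v x y))
      = Set.univ :=
    Set.eq_univ_of_forall fun x => mul_ne_zero
      (ENNReal.ofReal_pos.2 (hwpos x)).ne' (ENNReal.ofReal_pos.2 (phi_pos hv x y)).ne'
  rw [hsupp]
  exact Measure.measure_univ_pos.2 (NeZero.ne (volume : Measure ℝ))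

lemma bind_eq (hw : Measurable w) (hf : Measurable f) (hv : v ≠ 0)
    (κ : Kernel ℝ ℝ) (hκ : ∀ x, κ x = gaussianReal (f x) v) :
    (volume.withDensity (fun x => ENNReal.ofReal (w x))).bind κ
      = volume.withDensity (dens w f v) := by
  ext s hs
  rw [Measure.bind_apply hs κ.measurable.aemeasurable, withDensity_apply _ hs]
  have hκs : ∀ x, κ x s = ∫⁻ y in s, ENNReal.ofReal (phi f v x y) := by
    intro x
    rw [hκ x, gaussianReal_apply _ hv s]
    rfl
  simp_rw [hκs]
  have hsl : Measurable fun x => ∫⁻ y in s, ENNReal.ofReal (phi f v x y) :=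
    Measurable.lintegral_prod_right (f := fun x y => ENNReal.ofReal (phi f v x y))
      (by exact (measurable_phi hf).ennreal_ofReal)
  rw [lintegral_withDensity_eq_lintegral_mul _ hw.ennreal_ofReal hsl]
  simp only [Pi.mul_apply]
  have : ∀ x, ENNReal.ofReal (w x) * ∫⁻ y in s, ENNReal.ofReal (phi f v x y)
      = ∫⁻ y in s, ENNReal.ofReal (w x) * ENNReal.ofReal (phi f v x y) := by
    intro x
    rw [lintegral_const_mul' _ _ ENNReal.ofReal_ne_top]
  simp_rw [this]
  rw [lintegral_lintegral_swap
    (((hw.comp measurable_fst).ennreal_ofReal.mul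
      (measurable_phi hf).ennreal_ofReal).aemeasurable)]
  rfl

lemma integrable_prod (hu : Measurable u) (hf : Measurable f) (hv : v ≠ 0)
    (hint : Integrable u volume) :
    Integrable (fun p : ℝ × ℝ => u p.1 * phi f v p.1 p.2)
      ((volume : Measure ℝ).prod volume) := by
  refine ⟨((hu.comp measurable_fst).mul (measurable_phi hf)).aestronglyMeasurable, ?_⟩
  rw [hasFiniteIntegral_iff_norm]
  have hmeq : ∀ p : ℝ × ℝ, ENNReal.ofReal ‖u p.1 * phi f v p.1 p.2‖
      = ENNReal.ofReal |u p.1| * ENNReal.ofReal (phi f v p.1 p.2) := by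
    intro p
    rw [Real.norm_eq_abs, abs_mul, abs_of_nonneg (phi_nonneg f v _ _),
      ENNReal.ofReal_mul (abs_nonneg _)]
  calc ∫⁻ p : ℝ × ℝ, ENNReal.ofReal ‖u p.1 * phi f v p.1 p.2‖ ∂(volume.prod volume)
      = ∫⁻ p : ℝ × ℝ, ENNReal.ofReal |u p.1| * ENNReal.ofReal (phi f v p.1 p.2)
        ∂(volume.prod volume) := lintegral_congr hmeq
    _ = ∫⁻ x, ∫⁻ y, ENNReal.ofReal |u x| * ENNReal.ofReal (phi f v x y) := by
        have hmeas : Measurable fun p : ℝ × ℝ =>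
            ENNReal.ofReal |u p.1| * ENNReal.ofReal (phi f v p.1 p.2) := by
          exact (hu.comp measurable_fst).abs.ennreal_ofReal.mul
            (measurable_phi hf).ennreal_ofReal
        exact lintegral_prod _ hmeas.aemeasurable
    _ = ∫⁻ x, ENNReal.ofReal |u x| := by
        congr 1 with x
        rw [lintegral_const_mul' _ _ ENNReal.ofReal_ne_top, lintegral_phi hv x, mul_one]
    _ = ∫⁻ x, ENNReal.ofReal ‖u x‖ := by simp_rw [Real.norm_eq_abs]
    _ < ∞ := (hasFiniteIntegral_iff_norm u).1 hint.2

/-- The pointwise Jensen (log-sum) inequality with its equality case. -/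
lemma pointwise_jensen (hf : Measurable f) (hv : v ≠ 0)
    (hg' : Measurable g') (hg : Measurable g)
    (hg'0 : ∀ x, 0 < g' x) (hg0 : ∀ x, 0 < g x) {y : ℝ}
    (hPfin : dens g f v y ≠ ∞) (hP'fin : dens g' f v y ≠ ∞)
    (hLfin : dens (fun x => g' x * |log (g' x / g x)|) f v y ≠ ∞) :
    (dens g' f v y).toReal * log ((dens g' f v y).toReal / (dens g f v y).toReal)
      ≤ ∫ x, (g' x * log (g' x / g x)) * phi f v x y ∧
    ((dens g' f v y).toReal * log ((dens g' f v y).toReal / (dens g f v y).toReal)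
        = ∫ x, (g' x * log (g' x / g x)) * phi f v x y →
      (fun x => g' x / g x) =ᵐ[volume]
        fun _ => (dens g' f v y).toReal / (dens g f v y).toReal) := by
  have hP0 : dens g f v y ≠ 0 := dens_ne_zero hg hf hv hg0 y
  set D : ℝ≥0∞ := dens g f v y with hD
  set D' : ℝ≥0∞ := dens g' f v y with hD'
  set p : ℝ := D.toReal with hp
  set p' : ℝ := D'.toReal with hp'
  have hp_pos : 0 < p := ENNReal.toReal_pos hP0 hPfin
  have hp'_nonneg : 0 ≤ p' := ENNReal.toReal_nonneg
  set r : ℝ → ℝ := fun x => g' x / g x with hr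
  have hr_meas : Measurable r := hg'.div hg
  have hr0 : ∀ x, 0 ≤ r x := fun x => div_nonneg (hg'0 x).le (hg0 x).le
  have hgr : ∀ x, g x * r x = g' x := by
    intro x
    simp only [hr]
    rw [mul_comm]
    exact div_mul_cancel₀ _ (hg0 x).ne'
  -- the backward probability measure at y
  set W : ℝ → ℝ≥0 := fun x =>
    (D⁻¹ * (ENNReal.ofReal (g x) * ENNReal.ofReal (phi f v x y))).toNNReal with hW
  have hDinv_ne_top : D⁻¹ ≠ ∞ := ENNReal.inv_ne_top.2 hP0
  have hW_meas : Measurable W :=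
    ((measurable_const.mul (hg.ennreal_ofReal.mul
      (measurable_phi_right hf y).ennreal_ofReal))).ennreal_toNNReal
  have hWcoe : ∀ x, (W x : ℝ≥0∞)
      = D⁻¹ * (ENNReal.ofReal (g x) * ENNReal.ofReal (phi f v x y)) := fun x =>
    ENNReal.coe_toNNReal (ENNReal.mul_ne_top hDinv_ne_top
      (ENNReal.mul_ne_top ENNReal.ofReal_ne_top ENNReal.ofReal_ne_top))
  have hWreal : ∀ x, (W x : ℝ) = p⁻¹ * (g x * phi f v x y) := by
    intro x
    have : ((W x : ℝ≥0∞)).toReal = (W x : ℝ) := rfl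
    rw [← this, hWcoe x, ENNReal.toReal_mul, ENNReal.toReal_mul, ENNReal.toReal_inv,
      ENNReal.toReal_ofReal (hg0 x).le, ENNReal.toReal_ofReal (phi_nonneg f v x y)]
  have hW_ne_zero : ∀ x, (W x : ℝ≥0∞) ≠ 0 := by
    intro x
    rw [hWcoe x]
    exact mul_ne_zero (ENNReal.inv_ne_zero.2 hPfin)
      (mul_ne_zero (ENNReal.ofReal_pos.2 (hg0 x)).ne' (ENNReal.ofReal_pos.2 (phi_pos hv x y)).ne')
  set m : Measure ℝ := volume.withDensity (fun x => (W x : ℝ≥0∞)) with hm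
  have hm_prob : IsProbabilityMeasure m := by
    constructor
    rw [hm, withDensity_apply _ MeasurableSet.univ, Measure.restrict_univ,
      lintegral_congr hWcoe, lintegral_const_mul' _ _ hDinv_ne_top]
    exact ENNReal.inv_mul_cancel hP0 hPfin
  -- value of ∫ r dm
  have hint_g'phi : ∫ x, g' x * phi f v x y = p' := by
    rw [integral_eq_lintegral_of_nonneg_ae
      (ae_of_all _ fun x => mul_nonneg (hg'0 x).le (phi_nonneg f v x y))
      ((hg'.mul (measurable_phi_right hf y)).aestronglyMeasurable)]
    congr 1
    simp_rw [ENNReal.ofReal_mul (le_of_lt (hg'0 _))]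
    rfl
  have hr_int_val : ∫ x, r x ∂m = p' / p := by
    rw [hm, integral_withDensity_eq_integral_smul hW_meas r]
    have : ∀ x, W x • r x = p⁻¹ * (g' x * phi f v x y) := by
      intro x
      rw [NNReal.smul_def, smul_eq_mul, hWreal x]
      rw [← hgr x]; ring
    simp_rw [this]
    rw [integral_const_mul, hint_g'phi, inv_mul_eq_div]
  -- integrability of r with respect to m
  have hlint_r : ∫⁻ x, ENNReal.ofReal (r x) ∂m = D⁻¹ * D' := by
    rw [hm, lintegral_withDensity_eq_lintegral_mul _
      hW_meas.coe_nnreal_ennreal hr_meas.ennreal_ofReal]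
    have : ∀ x, ((W x : ℝ≥0∞) * ENNReal.ofReal (r x))
        = D⁻¹ * (ENNReal.ofReal (g' x) * ENNReal.ofReal (phi f v x y)) := by
      intro x
      rw [hWcoe x, ← hgr x, ENNReal.ofReal_mul (hg0 x).le]
      ring
    calc ∫⁻ x, ((fun x => (W x : ℝ≥0∞)) * fun x => ENNReal.ofReal (r x)) x
        = ∫⁻ x, D⁻¹ * (ENNReal.ofReal (g' x) * ENNReal.ofReal (phi f v x y)) :=
          lintegral_congr fun x => this x
      _ = D⁻¹ * D' := by rw [lintegral_const_mul' _ _ hDinv_ne_top]; rfl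
  have hr_int : Integrable r m := by
    refine ⟨hr_meas.aestronglyMeasurable, ?_⟩
    rw [hasFiniteIntegral_iff_norm]
    have : ∀ x, ENNReal.ofReal ‖r x‖ = ENNReal.ofReal (r x) := fun x => by
      rw [Real.norm_eq_abs, abs_of_nonneg (hr0 x)]
    simp_rw [this]
    rw [hlint_r]
    exact ENNReal.mul_lt_top hDinv_ne_top.lt_top hP'fin.lt_top
  -- integrability of r log r with respect to m
  have hlint_rlr : ∫⁻ x, ENNReal.ofReal (r x * |log (r x)|) ∂m
      = D⁻¹ * dens (fun x => g' x * |log (g' x / g x)|) f v y := by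
    rw [hm, lintegral_withDensity_eq_lintegral_mul _
      hW_meas.coe_nnreal_ennreal (show Measurable fun x => ENNReal.ofReal (r x * |log (r x)|) from
        ((hr_meas.mul hr_meas.log.abs)).ennreal_ofReal)]
    have : ∀ x, ((W x : ℝ≥0∞) * ENNReal.ofReal (r x * |log (r x)|))
        = D⁻¹ * (ENNReal.ofReal (g' x * |log (g' x / g x)|)
            * ENNReal.ofReal (phi f v x y)) := by
      intro x
      rw [hWcoe x]
      have h1 : g x * (r x * |log (r x)|) = g' x * |log (g' x / g x)| := by
        rw [← mul_assoc, hgr x, hr]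
      rw [← h1, ENNReal.ofReal_mul (hg0 x).le]
      ring
    calc ∫⁻ x, ((fun x => (W x : ℝ≥0∞)) * fun x => ENNReal.ofReal (r x * |log (r x)|)) x
        = ∫⁻ x, D⁻¹ * (ENNReal.ofReal (g' x * |log (g' x / g x)|)
            * ENNReal.ofReal (phi f v x y)) := lintegral_congr fun x => this x
      _ = _ := by rw [lintegral_const_mul' _ _ hDinv_ne_top]; rfl
  have hrl_int : Integrable (fun x => r x * log (r x)) m := by
    refine ⟨(hr_meas.mul hr_meas.log).aestronglyMeasurable, ?_⟩
    rw [hasFiniteIntegral_iff_norm]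
    have : ∀ x, ENNReal.ofReal ‖r x * log (r x)‖ = ENNReal.ofReal (r x * |log (r x)|) :=
      fun x => by rw [Real.norm_eq_abs, abs_mul, abs_of_nonneg (hr0 x)]
    simp_rw [this]
    rw [hlint_rlr]
    exact ENNReal.mul_lt_top hDinv_ne_top.lt_top hLfin.lt_top
  -- value of ∫ r log r dm
  have hrl_val : ∫ x, r x * log (r x) ∂m
      = p⁻¹ * ∫ x, (g' x * log (g' x / g x)) * phi f v x y := by
    rw [hm, integral_withDensity_eq_integral_smul hW_meas]
    have : ∀ x, W x • (r x * log (r x)) = p⁻¹ * ((g' x * log (r x)) * phi f v x y) := by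
      intro x
      rw [NNReal.smul_def, smul_eq_mul, hWreal x, ← hgr x]
      ring
    simp_rw [this]
    rw [integral_const_mul]
  set H : ℝ := ∫ x, (g' x * log (g' x / g x)) * phi f v x y with hHdef
  have e1 : p * (p' / p * log (p' / p)) = p' * log (p' / p) := by
    field_simp
  have e2 : p * (p⁻¹ * H) = H := by field_simp
  constructor
  · have hle := jensen_mul_log_le (m := m) (ae_of_all _ hr0) hr_int hrl_int
    rw [hr_int_val, hrl_val] at hle
    calc p' * log (p' / p) = p * (p' / p * log (p' / p)) := e1.symm
      _ ≤ p * (p⁻¹ * H) := by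
          exact mul_le_mul_of_nonneg_left hle hp_pos.le
      _ = H := e2
  · intro heq
    rcases jensen_mul_log (m := m) (ae_of_all _ hr0) hr_int hrl_int with hconst | hstrict
    · rw [hr_int_val] at hconst
      have hvm : volume ≪ m :=
        withDensity_absolutelyContinuous' hW_meas.coe_nnreal_ennreal.aemeasurable
          (ae_of_all _ hW_ne_zero)
      exact hvm.ae_le hconst
    · exfalso
      rw [hr_int_val, hrl_val] at hstrict
      have : p * (p' / p * log (p' / p)) < p * (p⁻¹ * H) :=
        (mul_lt_mul_iff_right₀ hp_pos).2 hstrict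
      rw [e1, e2] at this
      exact absurd heq this.ne
end CycleSDEAux

open CycleSDEAux

/-- **Theorem 3 (Contraction of Cycle-SDEs) for the 1D DDPM step.** The Gaussian transition
kernel `x ↦ N(f x, σ²)` strictly decreases the KL divergence between two distinct priors with
everywhere strictly positive Lebesgue densities. -/
theorem klDiv_bind_gaussian_lt
    (f : ℝ → ℝ) (hf_meas : Measurable f) (σ : ℝ≥0) (hσ : 0 < σ)
    (κ : Kernel ℝ ℝ) [IsMarkovKernel κ]
    (hκ : ∀ x, κ x = gaussianReal (f x) (σ ^ 2))
    (μ' μ : Measure ℝ) [IsProbabilityMeasure μ'] [IsProbabilityMeasure μ]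
    (g' g : ℝ → ℝ) (hg'_meas : Measurable g') (hg_meas : Measurable g)
    (hg'_pos : ∀ x, 0 < g' x) (hg_pos : ∀ x, 0 < g x)
    (hμ' : μ' = volume.withDensity (fun x => ENNReal.ofReal (g' x)))
    (hμ : μ = volume.withDensity (fun x => ENNReal.ofReal (g x)))
    (hne : μ' ≠ μ) (hfin : klDiv μ' μ < ⊤) :
    klDiv (μ'.bind κ) (μ.bind κ) < klDiv μ' μ := by
  classical
  have hv : (σ ^ 2 : ℝ≥0) ≠ 0 := pow_ne_zero _ hσ.ne'
  set v : ℝ≥0 := σ ^ 2 with hv_def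
  -- extract absolute continuity and integrability from finiteness of the KL divergence
  have hcond : μ' ≪ μ ∧ Integrable (llr μ' μ) μ' := by
    by_contra hc
    rw [klDiv, if_neg hc] at hfin
    exact absurd hfin (lt_irrefl _)
  obtain ⟨hac, hint⟩ := hcond
  -- identification of the log-likelihood ratio of the priors
  have hμ'_vol : μ' ≪ volume := by rw [hμ']; exact withDensity_absolutelyContinuous _ _
  have hllr_vol : llr μ' μ =ᵐ[volume] fun x => log (g' x / g x) := by
    have h := llr_wd (q' := fun x => ENNReal.ofReal (g' x)) (q := fun x => ENNReal.ofReal (g x))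
      hg'_meas.ennreal_ofReal hg_meas.ennreal_ofReal
      (ae_of_all _ fun x => ENNReal.ofReal_ne_top)
      (ae_of_all _ fun x => (ENNReal.ofReal_pos.2 (hg_pos x)).ne')
      (ae_of_all _ fun x => ENNReal.ofReal_ne_top)
    rw [← hμ', ← hμ] at h
    filter_upwards [h] with x hx
    rw [hx, ENNReal.toReal_ofReal (hg'_pos x).le, ENNReal.toReal_ofReal (hg_pos x).le]
  have hllr : llr μ' μ =ᵐ[μ'] fun x => log (g' x / g x) := hμ'_vol.ae_le hllr_vol
  have hμ'_nn : μ' = volume.withDensity (fun x => ((g' x).toNNReal : ℝ≥0∞)) := hμ'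
  set b : ℝ := ∫ x, g' x * log (g' x / g x) with hb_def
  have hsmul_g' : ∀ z : ℝ → ℝ, (fun x => (g' x).toNNReal • z x) = fun x => g' x * z x := by
    intro z; funext x
    rw [NNReal.smul_def, smul_eq_mul, Real.coe_toNNReal _ (hg'_pos x).le]
  have hbint : Integrable (fun x => g' x * log (g' x / g x)) volume := by
    have h1 : Integrable (fun x => log (g' x / g x)) μ' := hint.congr hllr
    rw [hμ'_nn, integrable_withDensity_iff_integrable_smul hg'_meas.real_toNNReal] at h1
    rwa [hsmul_g'] at h1
  have hb_eq : ∫ x, llr μ' μ x ∂μ' = b := by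
    rw [integral_congr_ae hllr, hμ'_nn,
      integral_withDensity_eq_integral_smul hg'_meas.real_toNNReal, hsmul_g']
  have hkl' : klDiv μ' μ = ENNReal.ofReal b := by rw [klDiv, if_pos ⟨hac, hint⟩, hb_eq]
  -- identification of the bound measures
  have hbind' : μ'.bind κ = volume.withDensity (dens g' f v) := by
    rw [hμ']; exact bind_eq hg'_meas hf_meas hv κ hκ
  have hbind : μ.bind κ = volume.withDensity (dens g f v) := by
    rw [hμ]; exact bind_eq hg_meas hf_meas hv κ hκ
  -- total masses
  have hG1 : ∫⁻ x, ENNReal.ofReal (g x) = 1 := by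
    have h := measure_univ (μ := μ)
    rwa [hμ, withDensity_apply _ MeasurableSet.univ, Measure.restrict_univ] at h
  have hG'1 : ∫⁻ x, ENNReal.ofReal (g' x) = 1 := by
    have h := measure_univ (μ := μ')
    rwa [hμ', withDensity_apply _ MeasurableSet.univ, Measure.restrict_univ] at h
  have hPlint : ∫⁻ y, dens g f v y = 1 := by
    rw [lintegral_dens hg_meas hf_meas hv, hG1]
  have hP'lint : ∫⁻ y, dens g' f v y = 1 := by
    rw [lintegral_dens hg'_meas hf_meas hv, hG'1]
  have hPfin : ∀ᵐ y : ℝ, dens g f v y ≠ ∞ :=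
    (ae_lt_top (measurable_dens hg_meas hf_meas)
      (by rw [hPlint]; exact ENNReal.one_ne_top)).mono fun y hy => hy.ne
  have hP'fin : ∀ᵐ y : ℝ, dens g' f v y ≠ ∞ :=
    (ae_lt_top (measurable_dens hg'_meas hf_meas)
      (by rw [hP'lint]; exact ENNReal.one_ne_top)).mono fun y hy => hy.ne
  -- a.e. finiteness of the |log|-weighted density
  have habs_meas : Measurable fun x => g' x * |log (g' x / g x)| :=
    hg'_meas.mul (hg'_meas.div hg_meas).log.abs
  have hLfin_total : ∫⁻ y, dens (fun x => g' x * |log (g' x / g x)|) f v y ≠ ∞ := by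
    rw [lintegral_dens habs_meas hf_meas hv]
    have h : ∀ x, ENNReal.ofReal (g' x * |log (g' x / g x)|)
        = ENNReal.ofReal ‖g' x * log (g' x / g x)‖ := by
      intro x; rw [Real.norm_eq_abs, abs_mul, abs_of_pos (hg'_pos x)]
    simp_rw [h]
    exact ((hasFiniteIntegral_iff_norm _).1 hbint.2).ne
  have hLfin : ∀ᵐ y : ℝ, dens (fun x => g' x * |log (g' x / g x)|) f v y ≠ ∞ :=
    (ae_lt_top (measurable_dens habs_meas hf_meas) hLfin_total).mono fun y hy => hy.ne
  -- the output densities and the two sides of the pointwise inequality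
  set p : ℝ → ℝ := fun y => (dens g f v y).toReal with hp_def
  set p' : ℝ → ℝ := fun y => (dens g' f v y).toReal with hp'_def
  set hfun : ℝ → ℝ := fun y => p' y * log (p' y / p y) with hh_def
  set H : ℝ → ℝ := fun y => ∫ x, (g' x * log (g' x / g x)) * phi f v x y with hH_def
  have hp_meas : Measurable p := (measurable_dens hg_meas hf_meas).ennreal_toReal
  have hp'_meas : Measurable p' := (measurable_dens hg'_meas hf_meas).ennreal_toReal
  have hh_meas : Measurable hfun := hp'_meas.mul (hp'_meas.div hp_meas).log
  have hp_int : Integrable p volume := integrable_toReal_of_lintegral_ne_top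
    (measurable_dens hg_meas hf_meas).aemeasurable
    (by rw [hPlint]; exact ENNReal.one_ne_top)
  have hp'_int : Integrable p' volume := integrable_toReal_of_lintegral_ne_top
    (measurable_dens hg'_meas hf_meas).aemeasurable
    (by rw [hP'lint]; exact ENNReal.one_ne_top)
  have hFprod : Integrable
      (fun q : ℝ × ℝ => (g' q.1 * log (g' q.1 / g q.1)) * phi f v q.1 q.2)
      ((volume : Measure ℝ).prod volume) :=
    integrable_prod (hg'_meas.mul (hg'_meas.div hg_meas).log) hf_meas hv hbint
  have hH_int : Integrable H volume := by
    have h := hFprod.integral_prod_right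
    exact h
  have hH_val : ∫ y, H y = b := by
    have hswap := integral_integral_swap
      (f := fun x y => (g' x * log (g' x / g x)) * phi f v x y)
      (μ := (volume : Measure ℝ)) (ν := (volume : Measure ℝ)) (by exact hFprod)
    rw [hH_def, ← hswap, hb_def]
    congr 1 with x
    rw [integral_const_mul, integral_phi hv x, mul_one]
  -- pointwise comparison
  have hh_le_H : hfun ≤ᵐ[volume] H := by
    filter_upwards [hPfin, hP'fin, hLfin] with y h1 h2 h3
    exact (pointwise_jensen hf_meas hv hg'_meas hg_meas hg'_pos hg_pos h1 h2 h3).1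
  -- lower bound and integrability of hfun
  have hh_lb : ∀ᵐ y : ℝ, -(Real.exp (-1)) * p y ≤ hfun y := by
    filter_upwards [hPfin] with y hy
    have hp0 : 0 < p y :=
      ENNReal.toReal_pos (dens_ne_zero hg_meas hf_meas hv hg_pos y) hy
    have ht0 : 0 ≤ p' y / p y := div_nonneg ENNReal.toReal_nonneg hp0.le
    have hlog := mul_log_ge_neg_exp ht0
    have hkey : hfun y = p y * ((p' y / p y) * log (p' y / p y)) := by
      simp only [hh_def]
      field_simp
    rw [hkey]
    calc -(Real.exp (-1)) * p y = p y * (-(Real.exp (-1))) := by ring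
      _ ≤ p y * ((p' y / p y) * log (p' y / p y)) :=
          mul_le_mul_of_nonneg_left hlog hp0.le
  have hh_int : Integrable hfun volume := by
    refine (hH_int.abs.add (hp_int.const_mul (Real.exp (-1)))).mono'
      hh_meas.aestronglyMeasurable ?_
    filter_upwards [hh_le_H, hh_lb, hPfin] with y h1 h2 hy
    have hp0 : 0 ≤ p y := ENNReal.toReal_nonneg
    have hexp : 0 ≤ Real.exp (-1) * p y := mul_nonneg (Real.exp_pos _).le hp0
    have hme : -(Real.exp (-1)) * p y = -(Real.exp (-1) * p y) := by ring
    rw [hme] at h2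
    rw [Real.norm_eq_abs, abs_le]
    have habsH : 0 ≤ |H y| := abs_nonneg (H y)
    have hHle : H y ≤ |H y| := le_abs_self _
    constructor
    · exact le_trans (neg_le_neg (le_add_of_nonneg_left habsH)) h2
    · exact le_trans h1 (hHle.trans (le_add_of_nonneg_right hexp))
  set a : ℝ := ∫ y, hfun y with ha_def
  have hab_le : a ≤ b := by
    rw [ha_def, ← hH_val]
    exact integral_mono_ae hh_int hH_int hh_le_H
  -- strictness
  have hab_ne : a ≠ b := by
    intro hEq
    have hsub0 : ∫ y, (H y - hfun y) = 0 := by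
      rw [integral_sub hH_int hh_int, hH_val, ← ha_def, ← hEq, sub_self]
    have hae0 : (fun y => H y - hfun y) =ᵐ[volume] 0 :=
      (integral_eq_zero_iff_of_nonneg_ae
        (by filter_upwards [hh_le_H] with y hy using sub_nonneg.2 hy)
        (hH_int.sub hh_int)).1 hsub0
    haveI : (ae (volume : Measure ℝ)).NeBot :=
      ae_neBot.2 (by simp [← Measure.measure_univ_eq_zero])
    obtain ⟨y₀, h1, h2, h3, h4⟩ := (hPfin.and (hP'fin.and (hLfin.and hae0))).exists
    have heq : hfun y₀ = H y₀ := by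
      have := h4
      simp only [Pi.zero_apply] at this
      linarith [this]
    have hconst := (pointwise_jensen hf_meas hv hg'_meas hg_meas hg'_pos hg_pos
      h1 h2 h3).2 heq
    set c : ℝ := p' y₀ / p y₀ with hc_def
    have hc0 : 0 ≤ c := div_nonneg ENNReal.toReal_nonneg ENNReal.toReal_nonneg
    have hgg : (fun x => ENNReal.ofReal (g' x)) =ᵐ[volume]
        (fun x => ENNReal.ofReal c * ENNReal.ofReal (g x)) := by
      filter_upwards [hconst] with x hx
      have hgx : g' x = c * g x := by
        rw [div_eq_iff (hg_pos x).ne'] at hx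
        exact hx
      rw [hgx, ENNReal.ofReal_mul hc0]
    have hμ'_eq : μ' = ENNReal.ofReal c • μ := by
      rw [hμ', withDensity_congr_ae hgg, hμ, ← withDensity_smul _ hg_meas.ennreal_ofReal]
      rfl
    have hc1 : ENNReal.ofReal c = 1 := by
      have h := measure_univ (μ := μ')
      rwa [hμ'_eq, Measure.smul_apply, measure_univ, smul_eq_mul, mul_one] at h
    exact hne (by rw [hμ'_eq, hc1, one_smul])
  have hab : a < b := lt_of_le_of_ne hab_le hab_ne
  -- nonnegativity of a via global Jensen
  have hcong : (fun y => ((dens g f v y).toNNReal : ℝ≥0∞)) =ᵐ[volume] dens g f v := by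
    filter_upwards [hPfin] with y hy using ENNReal.coe_toNNReal hy
  have hcong' : (fun y => ((dens g' f v y).toNNReal : ℝ≥0∞)) =ᵐ[volume] dens g' f v := by
    filter_upwards [hP'fin] with y hy using ENNReal.coe_toNNReal hy
  set mν : Measure ℝ := volume.withDensity (fun y => ((dens g f v y).toNNReal : ℝ≥0∞))
    with hmν_def
  haveI hmν_prob : IsProbabilityMeasure mν := by
    constructor
    rw [hmν_def, withDensity_apply _ MeasurableSet.univ, Measure.restrict_univ,
      lintegral_congr_ae hcong, hPlint]
  set t : ℝ → ℝ := fun y => p' y / p y with ht_def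
  have hs1 : (fun y => (dens g f v y).toNNReal • t y) =ᵐ[volume] p' := by
    filter_upwards [hPfin] with y hy
    have hp0 : p y ≠ 0 :=
      (ENNReal.toReal_pos (dens_ne_zero hg_meas hf_meas hv hg_pos y) hy).ne'
    have hpy : ((dens g f v y).toNNReal : ℝ) = p y := rfl
    rw [NNReal.smul_def, smul_eq_mul, hpy, ht_def]
    field_simp
  have hs2 : (fun y => (dens g f v y).toNNReal • (t y * log (t y))) =ᵐ[volume] hfun := by
    filter_upwards [hPfin] with y hy
    have hp0 : p y ≠ 0 :=
      (ENNReal.toReal_pos (dens_ne_zero hg_meas hf_meas hv hg_pos y) hy).ne'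
    have hpy : ((dens g f v y).toNNReal : ℝ) = p y := rfl
    rw [NNReal.smul_def, smul_eq_mul, hpy, ht_def, hh_def]
    field_simp
  have htm_int : Integrable t mν := by
    rw [hmν_def, integrable_withDensity_iff_integrable_smul
      (measurable_dens hg_meas hf_meas).ennreal_toNNReal]
    exact hp'_int.congr hs1.symm
  have htlm_int : Integrable (fun y => t y * log (t y)) mν := by
    rw [hmν_def, integrable_withDensity_iff_integrable_smul
      (measurable_dens hg_meas hf_meas).ennreal_toNNReal]
    exact hh_int.congr hs2.symm
  have ht_val : ∫ y, t y ∂mν = 1 := by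
    rw [hmν_def, integral_withDensity_eq_integral_smul
      (measurable_dens hg_meas hf_meas).ennreal_toNNReal, integral_congr_ae hs1]
    have h := integral_toReal (measurable_dens hg'_meas hf_meas).aemeasurable
      (hP'fin.mono fun y hy => lt_top_iff_ne_top.2 hy)
    rw [hp'_def]
    rw [h, hP'lint, ENNReal.toReal_one]
  have htl_val : ∫ y, t y * log (t y) ∂mν = a := by
    rw [hmν_def, integral_withDensity_eq_integral_smul
      (measurable_dens hg_meas hf_meas).ennreal_toNNReal, integral_congr_ae hs2, ha_def]
  have ha0 : 0 ≤ a := by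
    have h0 := jensen_mul_log_le (m := mν)
      (ae_of_all _ fun y => div_nonneg ENNReal.toReal_nonneg ENNReal.toReal_nonneg)
      htm_int htlm_int
    rw [ht_val, htl_val, Real.log_one, mul_zero] at h0
    exact h0
  -- KL divergence of the bound measures
  have hacν : μ'.bind κ ≪ μ.bind κ := by
    rw [hbind', hbind]
    exact wd_ac (measurable_dens hg_meas hf_meas)
      (ae_of_all _ (dens_ne_zero hg_meas hf_meas hv hg_pos))
  have hν'_vol : μ'.bind κ ≪ volume := by
    rw [hbind']; exact withDensity_absolutelyContinuous _ _
  have hllrν_vol : llr (μ'.bind κ) (μ.bind κ) =ᵐ[volume] fun y => log (p' y / p y) := by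
    have h := llr_wd (measurable_dens hg'_meas hf_meas) (measurable_dens hg_meas hf_meas)
      hP'fin (ae_of_all _ (dens_ne_zero hg_meas hf_meas hv hg_pos)) hPfin
    rw [← hbind', ← hbind] at h
    exact h
  have hllrν : llr (μ'.bind κ) (μ.bind κ) =ᵐ[μ'.bind κ] fun y => log (p' y / p y) :=
    hν'_vol.ae_le hllrν_vol
  have hν'_eq : μ'.bind κ
      = volume.withDensity (fun y => ((dens g' f v y).toNNReal : ℝ≥0∞)) := by
    rw [hbind']
    exact (withDensity_congr_ae hcong').symm
  have hsmul_p' : (fun y => (dens g' f v y).toNNReal • log (p' y / p y)) = hfun := by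
    funext y
    rw [NNReal.smul_def, smul_eq_mul, hh_def]
    rfl
  have hintν : Integrable (llr (μ'.bind κ) (μ.bind κ)) (μ'.bind κ) := by
    have h1 : Integrable (fun y => log (p' y / p y)) (μ'.bind κ) := by
      rw [hν'_eq, integrable_withDensity_iff_integrable_smul
        (measurable_dens hg'_meas hf_meas).ennreal_toNNReal]
      rw [hsmul_p']
      exact hh_int
    exact h1.congr hllrν.symm
  have hintν_val : ∫ y, llr (μ'.bind κ) (μ.bind κ) y ∂(μ'.bind κ) = a := by
    rw [integral_congr_ae hllrν, hν'_eq, integral_withDensity_eq_integral_smul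
      (measurable_dens hg'_meas hf_meas).ennreal_toNNReal, hsmul_p', ha_def]
  have hklν : klDiv (μ'.bind κ) (μ.bind κ) = ENNReal.ofReal a := by
    rw [klDiv, if_pos ⟨hacν, hintν⟩, hintν_val]
  rw [hklν, hkl']
  exact (ENNReal.ofReal_lt_ofReal_iff (lt_of_le_of_lt ha0 hab)).2 hab
end

section
/- Let s < t be real numbers, let F : ℝ → ℝ be differentiable on [s, t] with F(τ) ≥ 0 for all τ ∈ [s, t], and let h : ℝ → ℝ be continuous on [s, t]. If deriv F(τ) ≥ h(τ) · F(τ) for every τ ∈ [s, t], then F(s) ≤ exp(−∫_{s}^{t} h(τ) dτ) · F(t). -/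
open Set

/-- **Reverse Grönwall comparison (used in Proposition D.3).** If `F ≥ 0` is differentiable on
`[s,t]`, `h` is continuous on `[s,t]`, and `F' ≥ h·F` on `[s,t]`, then
`F s ≤ exp(−∫_s^t h) · F t`. -/
theorem le_exp_neg_integral_mul_of_deriv_ge (s t : ℝ) (hst : s < t) (F h : ℝ → ℝ)
    (hF_diff : DifferentiableOn ℝ F (Icc s t))
    (hF_nonneg : ∀ τ ∈ Icc s t, 0 ≤ F τ)
    (hh_cont : ContinuousOn h (Icc s t))
    (hderiv : ∀ τ ∈ Icc s t, h τ * F τ ≤ deriv F τ) :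
    F s ≤ Real.exp (-∫ τ in s..t, h τ) * F t := by
  set H : ℝ → ℝ := fun x => ∫ u in s..x, h u with hHdef
  set G : ℝ → ℝ := fun x => Real.exp (-H x) * F x with hGdef
  have hint : IntervalIntegrable h MeasureTheory.volume s t :=
    (hh_cont.mono (by rw [uIcc_of_le hst.le])).intervalIntegrable
  have hHcont : ContinuousOn H (Icc s t) := by
    have := intervalIntegral.continuousOn_primitive_interval' hint
      (left_mem_uIcc (a := s) (b := t))
    rwa [uIcc_of_le hst.le] at this
  have hGcont : ContinuousOn G (Icc s t) := by
    exact ((hHcont.neg.rexp).mul hF_diff.continuousOn)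
  have hGderiv : ∀ x ∈ Ioo s t, HasDerivAt G (Real.exp (-H x) * (deriv F x - h x * F x)) x := by
    intro x hx
    have hxIcc : Icc s t ∈ nhds x := Icc_mem_nhds hx.1 hx.2
    have hFd : DifferentiableAt ℝ F x := (hF_diff x (Ioo_subset_Icc_self hx)).differentiableAt hxIcc
    have hHd : HasDerivAt H (h x) x := by
      apply intervalIntegral.integral_hasDerivAt_right
      · exact (hh_cont.mono (by
          rw [uIcc_of_le hx.1.le]; exact Icc_subset_Icc le_rfl hx.2.le)).intervalIntegrable
      · exact ⟨Ioo s t, Ioo_mem_nhds hx.1 hx.2,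
          (hh_cont.mono Ioo_subset_Icc_self).aestronglyMeasurable measurableSet_Ioo⟩
      · exact hh_cont.continuousAt hxIcc
    have : HasDerivAt (fun y => Real.exp (-H y) * F y)
        (Real.exp (-H x) * -h x * F x + Real.exp (-H x) * deriv F x) x :=
      ((hHd.neg.exp).mul hFd.hasDerivAt)
    convert this using 1
    ring
  have hmono : MonotoneOn G (Icc s t) := by
    apply monotoneOn_of_deriv_nonneg (convex_Icc s t) hGcont
    · rw [interior_Icc]
      exact fun x hx => (hGderiv x hx).differentiableAt.differentiableWithinAt
    · rw [interior_Icc]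
      intro x hx
      rw [(hGderiv x hx).deriv]
      have h1 := hderiv x (Ioo_subset_Icc_self hx)
      exact mul_nonneg (Real.exp_pos _).le (by linarith)
  have := hmono (left_mem_Icc.2 hst.le) (right_mem_Icc.2 hst.le) hst.le
  simpa [hGdef, hHdef, intervalIntegral.integral_same] using this
end
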